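/- Let a_1, a_2, a_3, a_4 ∈ ℝ² form a convex quadrilateral in cyclic order. Then the two regions H_1^I ∩ H_2^O ∩ H_3^O ∩ H_4^O and H_3^I ∩ H_1^O ∩ H_2^O ∩ H_4^O cannot both be nonempty. -/

import Mathlib

/-- Twice the signed area of the triangle `p q r`; its sign tells on which side
of the directed line through `p` and `q` the point `r` lies. -/
def det2 (p q r : ℝ × ℝ) : ℝ :=
  (q.1 - p.1) * (r.2 - p.2) - (q.2 - p.2) * (r.1 - p.1)

/-- `v 0, v 1, v 2, v 3` form a convex quadrilateral in cyclic order: for each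
`i`, the points `v (i+2)` and `v (i+3)` lie strictly on the same side of the
line through `v i` and `v (i+1)`. -/
def ConvexCyclic (v : Fin 4 → ℝ × ℝ) : Prop :=
  ∀ i : Fin 4, 0 < det2 (v i) (v (i+1)) (v (i+2)) * det2 (v i) (v (i+1)) (v (i+3))

/-- The outer open half-plane of the edge `v i, v (i+1)`: the open half-plane
bounded by the line through `v i` and `v (i+1)` not containing `v (i+2)`
(and `v (i+3)`). -/
def Hout (v : Fin 4 → ℝ × ℝ) (i : Fin 4) : Set (ℝ × ℝ) :=
  {x | det2 (v i) (v (i+1)) x * det2 (v i) (v (i+1)) (v (i+2)) < 0}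

/-- The inner open half-plane of the edge `v i, v (i+1)`: the open half-plane
bounded by the line through `v i` and `v (i+1)` containing `v (i+2)`. -/
def Hin (v : Fin 4 → ℝ × ℝ) (i : Fin 4) : Set (ℝ × ℝ) :=
  {x | 0 < det2 (v i) (v (i+1)) x * det2 (v i) (v (i+1)) (v (i+2))}



private lemma pos_of_pos (a b : ℝ) (h : 0 < a * b) (ha : 0 < a) : 0 < b := by
  rcases mul_pos_iff.mp h with ⟨_, h⟩ | ⟨h, _⟩ <;> linarith

private lemma neg_of_neg (a b : ℝ) (h : 0 < a * b) (ha : a < 0) : b < 0 := by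
  rcases mul_pos_iff.mp h with ⟨h, _⟩ | ⟨_, h⟩ <;> linarith

private lemma neg_of_pos' (a b : ℝ) (h : a * b < 0) (hb : 0 < b) : a < 0 := by
  rcases mul_neg_iff.mp h with ⟨_, h⟩ | ⟨h, _⟩ <;> linarith

private lemma pos_of_neg' (a b : ℝ) (h : a * b < 0) (hb : b < 0) : 0 < a := by
  rcases mul_neg_iff.mp h with ⟨h, _⟩ | ⟨_, h⟩ <;> linarith

lemma core_contra (d0 d1 d2 d3 F0x F1x F3x F1y F2y F3y : ℝ)
    (id1 : (d3 - d2) * F0x = -(d3 * F1x) - d0 * F3x + d0 * d3)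
    (id2 : (d2 - d3) * F2y = -(d2 * F1y) - d1 * F3y + d1 * d2)
    (h03 : 0 < d0 * d3) (h10 : 0 < d1 * d0) (h21 : 0 < d2 * d1)
    (hx0 : 0 < F0x * d0) (hx1 : F1x * d1 < 0) (hx3 : F3x * d3 < 0)
    (hy2 : 0 < F2y * d2) (hy1 : F1y * d1 < 0) (hy3 : F3y * d3 < 0) : False := by
  rcases lt_trichotomy d0 0 with hd0 | hd0 | hd0
  · have hd3 : d3 < 0 := by
      rcases mul_pos_iff.mp h03 with ⟨h, _⟩ | ⟨_, h⟩ <;> linarith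
    have hd1 : d1 < 0 := neg_of_neg d0 d1 (by linarith [mul_comm d1 d0]) hd0
    have hd2 : d2 < 0 := neg_of_neg d1 d2 (by linarith [mul_comm d2 d1]) hd1
    have h1 : F0x < 0 := neg_of_neg d0 F0x (by linarith [mul_comm F0x d0]) hd0
    have h2 : 0 < F1x := pos_of_neg' F1x d1 hx1 hd1
    have h3 : 0 < F3x := pos_of_neg' F3x d3 hx3 hd3
    have h4 : F2y < 0 := neg_of_neg d2 F2y (by linarith [mul_comm F2y d2]) hd2
    have h5 : 0 < F1y := pos_of_neg' F1y d1 hy1 hd1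
    have h6 : 0 < F3y := pos_of_neg' F3y d3 hy3 hd3
    rcases le_or_gt d2 d3 with hc | hc
    · nlinarith [mul_pos (neg_pos.mpr hd3) h2, mul_pos (neg_pos.mpr hd0) h3,
        mul_pos (neg_pos.mpr hd0) (neg_pos.mpr hd3),
        mul_nonneg (sub_nonneg.mpr hc) (le_of_lt (neg_pos.mpr h1))]
    · nlinarith [mul_pos (neg_pos.mpr hd2) h5, mul_pos (neg_pos.mpr hd1) h6,
        mul_pos (neg_pos.mpr hd1) (neg_pos.mpr hd2),
        mul_nonneg (le_of_lt (sub_pos.mpr hc)) (le_of_lt (neg_pos.mpr h4))]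
  · rw [hd0, zero_mul] at h03; exact lt_irrefl 0 h03
  · have hd3 : 0 < d3 := pos_of_pos d0 d3 h03 hd0
    have hd1 : 0 < d1 := pos_of_pos d0 d1 (by linarith [mul_comm d1 d0]) hd0
    have hd2 : 0 < d2 := pos_of_pos d1 d2 (by linarith [mul_comm d2 d1]) hd1
    have h1 : 0 < F0x := pos_of_pos d0 F0x (by linarith [mul_comm F0x d0]) hd0
    have h2 : F1x < 0 := neg_of_pos' F1x d1 hx1 hd1
    have h3 : F3x < 0 := neg_of_pos' F3x d3 hx3 hd3
    have h4 : 0 < F2y := pos_of_pos d2 F2y (by linarith [mul_comm F2y d2]) hd2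
    have h5 : F1y < 0 := neg_of_pos' F1y d1 hy1 hd1
    have h6 : F3y < 0 := neg_of_pos' F3y d3 hy3 hd3
    rcases le_or_gt d3 d2 with hc | hc
    · nlinarith [mul_pos hd3 (neg_pos.mpr h2), mul_pos hd0 (neg_pos.mpr h3),
        mul_pos hd0 hd3, mul_nonneg (sub_nonneg.mpr hc) (le_of_lt h1)]
    · nlinarith [mul_pos hd2 (neg_pos.mpr h5), mul_pos hd1 (neg_pos.mpr h6),
        mul_pos hd1 hd2, mul_nonneg (le_of_lt (sub_pos.mpr hc)) (le_of_lt h4)]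

/-- For a convex quadrilateral in cyclic order, the regions
`H₁ᴵ ∩ H₂ᴼ ∩ H₃ᴼ ∩ H₄ᴼ` and `H₃ᴵ ∩ H₁ᴼ ∩ H₂ᴼ ∩ H₄ᴼ` cannot both be nonempty
(with 0-based indices: edges `0` and `2`). -/
theorem opposite_edges_not_both_good (v : Fin 4 → ℝ × ℝ) (hconv : ConvexCyclic v) :
    ¬ ((Hin v 0 ∩ Hout v 1 ∩ Hout v 2 ∩ Hout v 3).Nonempty ∧
       (Hin v 2 ∩ Hout v 0 ∩ Hout v 1 ∩ Hout v 3).Nonempty) := by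
  rintro ⟨⟨x, hx⟩, ⟨y, hy⟩⟩
  simp only [Hin, Hout, Set.mem_inter_iff, Set.mem_setOf_eq] at hx hy
  obtain ⟨⟨⟨hx0, hx1⟩, hx2⟩, hx3⟩ := hx
  obtain ⟨⟨⟨hy2, hy0⟩, hy1⟩, hy3⟩ := hy
  have h0 := hconv 0
  have h1 := hconv 1
  have h2 := hconv 2
  norm_num at h0 h1 h2 hx0 hx1 hx2 hx3 hy2 hy0 hy1 hy3
  simp only [show (4:Fin 4) = 0 by decide, show (5:Fin 4) = 1 by decide, show (1+1:Fin 4) = 2 by decide, show (1+2:Fin 4) = 3 by decide, show (1+3:Fin 4) = 0 by decide, show (2+1:Fin 4) = 3 by decide, show (2+2:Fin 4) = 0 by decide, show (2+3:Fin 4) = 1 by decide, show (3+1:Fin 4) = 0 by decide, show (3+2:Fin 4) = 1 by decide] at h0 h1 h2 hx0 hx1 hx2 hx3 hy2 hy0 hy1 hy3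
  set d0 := det2 (v 0) (v 1) (v 2) with hd0
  set d1 := det2 (v 1) (v 2) (v 3) with hd1
  set d2 := det2 (v 2) (v 3) (v 0) with hd2
  set d3 := det2 (v 3) (v 0) (v 1) with hd3
  have hcyc0 : det2 (v 0) (v 1) (v 3) = d3 := by simp only [hd3, det2]; ring
  have hcyc1 : det2 (v 1) (v 2) (v 0) = d0 := by simp only [hd0, det2]; ring
  have hcyc2 : det2 (v 2) (v 3) (v 1) = d1 := by simp only [hd1, det2]; ring
  rw [hcyc0] at h0
  rw [hcyc1] at h1
  rw [hcyc2] at h2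
  exact core_contra d0 d1 d2 d3
    (det2 (v 0) (v 1) x) (det2 (v 1) (v 2) x) (det2 (v 3) (v 0) x)
    (det2 (v 1) (v 2) y) (det2 (v 2) (v 3) y) (det2 (v 3) (v 0) y)
    (by simp only [hd0, hd1, hd2, hd3, det2]; ring)
    (by simp only [hd0, hd1, hd2, hd3, det2]; ring)
    h0 h1 h2 hx0 hx1 hx3 hy2 hy1 hy3
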